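/- Let A ⊆ ℝ^d be closed and 0 < r < ∞. Then reach A ≥ r if and only if for all a, b ∈ A, dist(b − a, Tan(A,a)) ≤ |b−a|²/(2r). -/

import Mathlib

open Metric Set MeasureTheory
open scoped RealInnerProductSpace ENNReal NNReal

noncomputable section

abbrev Euc (d : ℕ) := EuclideanSpace ℝ (Fin d)

/-- Points of the ambient space having a unique nearest point in `A`. -/
def unp {d : ℕ} (A : Set (Euc d)) : Set (Euc d) :=
  {x | ∃! a, a ∈ A ∧ dist x a = Metric.infDist x A}

/-- Federer's local reach `reach (A, a)`. -/
def reachAt {d : ℕ} (A : Set (Euc d)) (a : Euc d) : ℝ≥0∞ :=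
  sSup {r : ℝ≥0∞ | ∀ x : Euc d, edist x a < r → x ∈ unp A}

/-- Federer's reach of a set. -/
def reach {d : ℕ} (A : Set (Euc d)) : ℝ≥0∞ := ⨅ a ∈ A, reachAt A a

/-- The tangent cone of `A` at `a`: `u` is a tangent vector iff `u = 0` or `u` is a limit of
`r i • (x i - a)` with `x i ∈ A \ {a}`, `x i → a`, `r i > 0`. -/
def tanCone {d : ℕ} (A : Set (Euc d)) (a : Euc d) : Set (Euc d) :=
  {u | u = 0 ∨ ∃ (x : ℕ → Euc d) (r : ℕ → ℝ),
    (∀ n, x n ∈ A ∧ x n ≠ a) ∧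
    Filter.Tendsto x Filter.atTop (nhds a) ∧
    (∀ n, 0 < r n) ∧
    Filter.Tendsto (fun n => r n • (x n - a)) Filter.atTop (nhds u)}

/-- The dimension of the tangent cone of `A` at `a`. -/
def tanDim {d : ℕ} (A : Set (Euc d)) (a : Euc d) : ℕ :=
  Module.finrank ℝ (Submodule.span ℝ (tanCone A a))

/-- The set of points of `A` at which the tangent cone has dimension `k`. -/
def Tk {d : ℕ} (A : Set (Euc d)) (k : ℕ) : Set (Euc d) :=
  {x | x ∈ A ∧ tanDim A x = k}

/-- Whitney's fullness `Θ(σ) = vol_k(σ) / (diam σ)^k` of a set. -/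
def fullness {d : ℕ} (k : ℕ) (s : Set (Euc d)) : ℝ :=
  (μH[(k : ℝ)] s).toReal / (Metric.diam s) ^ k

/-- The metric `ρ_k` on the Grassmannian of subspaces of `ℝ^d`. -/
def grassDist {d : ℕ} (U V : Submodule ℝ (Euc d)) : ℝ :=
  max (sSup ((fun u => Metric.infDist u (V : Set (Euc d))) '' {u | u ∈ U ∧ ‖u‖ = 1}))
      (sSup ((fun v => Metric.infDist v (U : Set (Euc d))) '' {v | v ∈ V ∧ ‖v‖ = 1}))

/-! ### Auxiliary lemmas -/

section Aux

variable {d : ℕ}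

/-- `0` is a tangent vector. -/
lemma zero_mem_tanCone (A : Set (Euc d)) (a : Euc d) : (0 : Euc d) ∈ tanCone A a :=
  Or.inl rfl

lemma my_le_infDist {A : Set (Euc d)} (hA : A.Nonempty) {x : Euc d} {b : ℝ}
    (h : ∀ y ∈ A, b ≤ dist x y) : b ≤ Metric.infDist x A := by
  by_contra hc
  push_neg at hc
  obtain ⟨y, hy, hlt⟩ := (Metric.infDist_lt_iff hA).mp hc
  exact absurd (h y hy) (by linarith)

/-- Translation of `ENNReal.ofReal r ≤ reach A` into a statement about metric balls. -/
lemma reach_ge_iff {A : Set (Euc d)} {r : ℝ} :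
    ENNReal.ofReal r ≤ reach A ↔
      ∀ a ∈ A, ∀ x : Euc d, dist x a < r → x ∈ unp A := by
  rw [reach, le_iInf₂_iff]
  constructor
  · intro H a ha x hx
    have h3 : edist x a < reachAt A a :=
      lt_of_lt_of_le (edist_lt_ofReal.mpr hx) (H a ha)
    rw [reachAt] at h3
    obtain ⟨s, hs, hlt⟩ := lt_sSup_iff.mp h3
    exact hs x hlt
  · intro H a ha
    refine le_sSup ?_
    intro x hx
    exact H a ha x (edist_lt_ofReal.mp hx)

/-- scalar helper : from `s^2 - β ≤ t^2` deduce `s - β/s ≤ t`. -/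
lemma scalar_step {t s β : ℝ} (ht : 0 ≤ t) (hs : 0 < s) (hβ : 0 ≤ β)
    (h : s ^ 2 - β ≤ t ^ 2) : s - β / s ≤ t := by
  have key : s ^ 2 - β ≤ t * s := by
    rcases le_or_gt s t with h1 | h1
    · nlinarith
    · nlinarith [mul_nonneg (sub_nonneg.mpr h1.le) (sub_nonneg.mpr (le_refl s))]
  have e : s - β / s = (s ^ 2 - β) / s := by field_simp
  rw [e, div_le_iff₀ hs]
  linarith

/-- One Euler step increases the distance to `A` by almost `h`. -/
lemma step_alg (z c q z' : Euc d) (h δ₀ : ℝ) (hh : 0 < h) (hδ₀ : 0 < δ₀)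
    (hδ : δ₀ ≤ ‖z - c‖) (hq : ‖z - c‖ ≤ ‖z - q‖)
    (hz' : z' = z + (h / ‖z - c‖) • (z - c)) :
    ‖z - c‖ + h - h * ‖q - c‖ ^ 2 / δ₀ ^ 2 ≤ ‖z' - q‖ := by
  have hδp : (0:ℝ) < ‖z - c‖ := lt_of_lt_of_le hδ₀ hδ
  set δ := ‖z - c‖ with hδdef
  set ρ := ‖q - c‖ with hρdef
  have hρ0 : 0 ≤ ρ := norm_nonneg _
  have e0 : ‖z - q‖ ^ 2 = δ ^ 2 - 2 * ⟪z - c, q - c⟫ + ρ ^ 2 := by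
    have e : z - q = (z - c) - (q - c) := by abel
    rw [e, norm_sub_sq_real]
  have hsq : δ ^ 2 ≤ ‖z - q‖ ^ 2 := pow_le_pow_left₀ (norm_nonneg _) hq 2
  have hι : ⟪z - c, q - c⟫ ≤ ρ ^ 2 / 2 := by linarith
  have e1 : ‖z' - q‖ ^ 2
      = ‖z - q‖ ^ 2 + 2 * (h / δ * (δ ^ 2 - ⟪z - c, q - c⟫)) + h ^ 2 := by
    have e : z' - q = (z - q) + (h / δ) • (z - c) := by rw [hz']; abel
    have e2 : ⟪z - q, z - c⟫ = δ ^ 2 - ⟪z - c, q - c⟫ := by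
      have e3 : z - q = (z - c) - (q - c) := by abel
      rw [real_inner_comm, e3, inner_sub_right, real_inner_self_eq_norm_sq]
    have e4 : ‖(h / δ) • (z - c)‖ = h := by
      rw [norm_smul, Real.norm_eq_abs, abs_of_pos (by positivity : (0:ℝ) < h / δ)]
      field_simp
      exact hδdef.symm
    rw [e, norm_add_sq_real, real_inner_smul_right, e2, e4]
  have key : (δ + h) ^ 2 - h * ρ ^ 2 / δ ≤ ‖z' - q‖ ^ 2 := by
    rw [e1]
    have h1 : h / δ * (δ ^ 2 - ρ ^ 2 / 2) ≤ h / δ * (δ ^ 2 - ⟪z - c, q - c⟫) :=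
      mul_le_mul_of_nonneg_left (by linarith) (by positivity)
    have h2 : h / δ * (δ ^ 2 - ρ ^ 2 / 2) = h * δ - h * ρ ^ 2 / δ / 2 := by
      field_simp
    nlinarith
  have hs := scalar_step (norm_nonneg (z' - q)) (by positivity : (0:ℝ) < δ + h)
    (by positivity : (0:ℝ) ≤ h * ρ ^ 2 / δ) key
  have hfin : h * ρ ^ 2 / δ / (δ + h) ≤ h * ρ ^ 2 / δ₀ ^ 2 := by
    rw [div_div]
    apply div_le_div_of_nonneg_left (by positivity) (by positivity)
    nlinarith
  linarith

set_option maxHeartbeats 1000000 in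
/-- Endgame algebra: a point far from `A` in direction `ν` gives the proximal inequality. -/
lemma endgame (c x₀ w y : Euc d) (D E : ℝ) (hE : 0 ≤ E) (hE2 : E ≤ ‖x₀ - c‖ / 2)
    (hδ : 0 < ‖x₀ - c‖) (hD : ‖x₀ - c‖ ≤ D)
    (h1 : ‖w - x₀‖ ≤ D - ‖x₀ - c‖) (h2 : D - E ≤ ‖w - c‖) (h3 : D - E ≤ ‖w - y‖) :
    ⟪x₀ - c, y - c⟫ ≤
      ‖x₀ - c‖ * (‖y - c‖ ^ 2 / (2 * D) + E + ‖y - c‖ * Real.sqrt (2 * E / ‖x₀ - c‖)) := by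
  set δ₀ := ‖x₀ - c‖ with hδ₀def
  set u := w - c with hudef
  set K := ‖y - c‖ with hKdef
  have hK0 : 0 ≤ K := norm_nonneg _
  have hDpos : 0 < D := lt_of_lt_of_le hδ hD
  have hDE : 0 ≤ D - E := by linarith
  have hu_ub : ‖u‖ ≤ D := by
    have : u = (w - x₀) + (x₀ - c) := by rw [hudef]; abel
    calc ‖u‖ ≤ ‖w - x₀‖ + ‖x₀ - c‖ := by rw [this]; exact norm_add_le _ _
      _ ≤ (D - δ₀) + δ₀ := by have := h1; linarith
      _ = D := by ring
  have hinner1 : δ₀ * D - D * E ≤ ⟪u, x₀ - c⟫ := by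
    have e : u - (x₀ - c) = w - x₀ := by rw [hudef]; abel
    have hh1 : ‖u - (x₀ - c)‖ ^ 2 ≤ (D - δ₀) ^ 2 := by
      rw [e]; exact pow_le_pow_left₀ (norm_nonneg _) h1 2
    have hexp : ‖u - (x₀ - c)‖ ^ 2 = ‖u‖ ^ 2 - 2 * ⟪u, x₀ - c⟫ + δ₀ ^ 2 := by
      rw [norm_sub_sq_real]
    have hu_lb : (D - E) ^ 2 ≤ ‖u‖ ^ 2 := pow_le_pow_left₀ hDE h2 2
    nlinarith
  have hsmall : ‖δ₀ • u - D • (x₀ - c)‖ ^ 2 ≤ 2 * δ₀ * D ^ 2 * E := by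
    have hexp : ‖δ₀ • u - D • (x₀ - c)‖ ^ 2
        = δ₀ ^ 2 * ‖u‖ ^ 2 - 2 * (δ₀ * D * ⟪u, x₀ - c⟫) + D ^ 2 * δ₀ ^ 2 := by
      rw [norm_sub_sq_real, real_inner_smul_left, real_inner_smul_right,
        norm_smul, norm_smul, Real.norm_eq_abs, Real.norm_eq_abs,
        abs_of_pos hδ, abs_of_pos hDpos]
      ring
    have hu2 : ‖u‖ ^ 2 ≤ D ^ 2 := pow_le_pow_left₀ (norm_nonneg _) hu_ub 2
    nlinarith [mul_pos hδ hDpos]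
  have hsq : ‖δ₀ • u - D • (x₀ - c)‖ ≤ D * δ₀ * Real.sqrt (2 * E / δ₀) := by
    have hrhs : (D * δ₀ * Real.sqrt (2 * E / δ₀)) ^ 2 = 2 * δ₀ * D ^ 2 * E := by
      rw [mul_pow, mul_pow, Real.sq_sqrt (by positivity : (0:ℝ) ≤ 2 * E / δ₀)]
      field_simp
    nlinarith [norm_nonneg (δ₀ • u - D • (x₀ - c)),
      mul_nonneg (mul_nonneg hDpos.le hδ.le) (Real.sqrt_nonneg (2 * E / δ₀))]
  have hinner2 : ⟪y - c, u⟫ ≤ K ^ 2 / 2 + D * E := by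
    have e : (y - c) - u = -(w - y) := by rw [hudef]; abel
    have hh3 : (D - E) ^ 2 ≤ ‖(y - c) - u‖ ^ 2 := by
      rw [e, norm_neg]; exact pow_le_pow_left₀ hDE h3 2
    have hexp : ‖(y - c) - u‖ ^ 2 = K ^ 2 - 2 * ⟪y - c, u⟫ + ‖u‖ ^ 2 := by
      rw [norm_sub_sq_real]
    have hu2 : ‖u‖ ^ 2 ≤ D ^ 2 := pow_le_pow_left₀ (norm_nonneg _) hu_ub 2
    nlinarith
  have hcs : ⟪y - c, D • (x₀ - c) - δ₀ • u⟫ ≤ K * (D * δ₀ * Real.sqrt (2 * E / δ₀)) := by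
    calc ⟪y - c, D • (x₀ - c) - δ₀ • u⟫ ≤ ‖y - c‖ * ‖D • (x₀ - c) - δ₀ • u‖ :=
          real_inner_le_norm _ _
      _ = K * ‖δ₀ • u - D • (x₀ - c)‖ := by
          rw [norm_sub_rev (D • (x₀ - c)) (δ₀ • u)]
      _ ≤ K * (D * δ₀ * Real.sqrt (2 * E / δ₀)) := mul_le_mul_of_nonneg_left hsq hK0
  have hsplit : D * ⟪x₀ - c, y - c⟫
      = ⟪y - c, D • (x₀ - c) - δ₀ • u⟫ + δ₀ * ⟪y - c, u⟫ := by
    have t1 : ⟪y - c, D • (x₀ - c) - δ₀ • u⟫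
        = D * ⟪y - c, x₀ - c⟫ - δ₀ * ⟪y - c, u⟫ := by
      rw [inner_sub_right, real_inner_smul_right, real_inner_smul_right]
    rw [t1, real_inner_comm (y - c) (x₀ - c)]
    ring
  have hmain : D * ⟪x₀ - c, y - c⟫
      ≤ D * (δ₀ * (K ^ 2 / (2 * D) + E + K * Real.sqrt (2 * E / δ₀))) := by
    have hδK : δ₀ * ⟪y - c, u⟫ ≤ δ₀ * (K ^ 2 / 2 + D * E) :=
      mul_le_mul_of_nonneg_left hinner2 hδ.le
    have eRHS : D * (δ₀ * (K ^ 2 / (2 * D) + E + K * Real.sqrt (2 * E / δ₀)))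
        = K * (D * δ₀ * Real.sqrt (2 * E / δ₀)) + δ₀ * (K ^ 2 / 2 + D * E) := by
      field_simp; ring
    rw [hsplit, eRHS]
    linarith
  exact le_of_mul_le_mul_left hmain hDpos

end Aux

section Main

variable {d : ℕ} {A : Set (Euc d)}

/-- Continuity of the metric projection on the region of uniqueness. -/
lemma proj_contOn (hA : IsClosed A) (P : Euc d → Euc d)
    (hPmem : ∀ z, P z ∈ A) (hPd : ∀ z, Metric.infDist z A = dist z (P z))
    {r : ℝ}
    (huniq : ∀ z, Metric.infDist z A < r → ∀ p ∈ A, dist z p = Metric.infDist z A → p = P z) :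
    ContinuousOn P {z | Metric.infDist z A < r} := by
  refine continuousOn_of_forall_continuousAt ?_
  intro z hz
  by_contra hc
  rw [Metric.continuousAt_iff] at hc
  push_neg at hc
  obtain ⟨ε, hε, hseq⟩ := hc
  have hsel : ∀ n : ℕ, ∃ x : Euc d, dist x z < 1 / (n + 1) ∧ ε ≤ dist (P x) (P z) := by
    intro n
    obtain ⟨x, hx1, hx2⟩ := hseq (1 / (n + 1)) (by positivity)
    exact ⟨x, hx1, hx2⟩
  choose xs hxs1 hxs2 using hsel
  have hxz : Filter.Tendsto xs Filter.atTop (nhds z) := by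
    rw [tendsto_iff_dist_tendsto_zero]
    exact squeeze_zero (fun n => dist_nonneg) (fun n => (hxs1 n).le)
      tendsto_one_div_add_atTop_nhds_zero_nat
  have hbd : ∀ n, P (xs n) ∈ Metric.closedBall z (Metric.infDist z A + 2) := by
    intro n
    have h1 : dist (xs n) z ≤ 1 := le_trans (hxs1 n).le (by
      rw [div_le_one (by positivity)]
      have : (0:ℝ) ≤ (n:ℝ) := Nat.cast_nonneg n
      linarith)
    have h2 : dist (P (xs n)) z ≤ dist (P (xs n)) (xs n) + dist (xs n) z := dist_triangle _ _ _
    have h3 : dist (P (xs n)) (xs n) = Metric.infDist (xs n) A := by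
      rw [dist_comm]; exact (hPd (xs n)).symm
    have h4 : Metric.infDist (xs n) A ≤ Metric.infDist z A + dist (xs n) z :=
      Metric.infDist_le_infDist_add_dist
    rw [Metric.mem_closedBall]
    linarith
  obtain ⟨p, _, φ, hφ, hconv⟩ :=
    tendsto_subseq_of_bounded Metric.isBounded_closedBall hbd
  have hxφ : Filter.Tendsto (fun n => xs (φ n)) Filter.atTop (nhds z) :=
    hxz.comp hφ.tendsto_atTop
  have hpA : p ∈ A :=
    hA.mem_of_tendsto hconv (Filter.Eventually.of_forall (fun n => hPmem _))
  have l1 : Filter.Tendsto (fun n => dist (xs (φ n)) (P (xs (φ n))))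
      Filter.atTop (nhds (dist z p)) := hxφ.dist hconv
  have l2 : Filter.Tendsto (fun n => dist (xs (φ n)) (P (xs (φ n))))
      Filter.atTop (nhds (Metric.infDist z A)) := by
    have : (fun n => dist (xs (φ n)) (P (xs (φ n))))
        = fun n => Metric.infDist (xs (φ n)) A := by
      funext n; exact (hPd _).symm
    rw [this]
    exact ((continuous_infDist_pt A).tendsto z).comp hxφ
  have hdzp : dist z p = Metric.infDist z A := tendsto_nhds_unique l1 l2
  have hpP : p = P z := huniq z hz p hpA hdzp
  have hεle : ε ≤ dist p (P z) :=
    ge_of_tendsto' (hconv.dist (tendsto_const_nhds (x := P z))) (fun n => hxs2 (φ n))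
  rw [← hpP] at hεle
  simp at hεle
  linarith

/-- The Euler scheme: starting from `x₀` one can reach distance `D` from `A`
while moving only `D - δ₀`. -/
lemma reach_point (hA : IsClosed A) (P : Euc d → Euc d)
    (hPmem : ∀ z, P z ∈ A) (hPd : ∀ z, Metric.infDist z A = dist z (P z))
    {r : ℝ}
    (hcont : ContinuousOn P {z | Metric.infDist z A < r})
    (x₀ : Euc d) (hx₀ : 0 < Metric.infDist x₀ A)
    (D : ℝ) (hD1 : Metric.infDist x₀ A ≤ D) (hD2 : D < r)
    (E : ℝ) (hE : 0 < E) :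
    ∃ w : Euc d, ‖w - x₀‖ ≤ D - Metric.infDist x₀ A ∧ D - E ≤ Metric.infDist w A := by
  set δ₀ := Metric.infDist x₀ A with hδ₀def
  rcases eq_or_lt_of_le hD1 with heq | hlt
  · refine ⟨x₀, ?_, ?_⟩
    · simp [← heq]
    · rw [← heq]; linarith
  set L := D - δ₀ with hLdef
  have hLpos : 0 < L := by simp only [hLdef]; linarith
  have hDpos : 0 < D := lt_trans hx₀ hlt
  set ε₁ := min δ₀ (Real.sqrt (E * δ₀ ^ 2 / L)) with hε₁def
  have hε₁pos : 0 < ε₁ := lt_min hx₀ (Real.sqrt_pos.mpr (by positivity))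
  have hε₁δ : ε₁ ≤ δ₀ := min_le_left _ _
  have hε₁E : L * ε₁ ^ 2 / δ₀ ^ 2 ≤ E := by
    have h1 : ε₁ ^ 2 ≤ E * δ₀ ^ 2 / L := by
      have h2 : ε₁ ≤ Real.sqrt (E * δ₀ ^ 2 / L) := min_le_right _ _
      have h3 := pow_le_pow_left₀ hε₁pos.le h2 2
      rwa [Real.sq_sqrt (by positivity : (0:ℝ) ≤ E * δ₀ ^ 2 / L)] at h3
    calc L * ε₁ ^ 2 / δ₀ ^ 2 ≤ L * (E * δ₀ ^ 2 / L) / δ₀ ^ 2 := by gcongr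
      _ = E := by field_simp
  set S := Metric.closedBall x₀ D ∩ {z | Metric.infDist z A ≤ D} with hSdef
  have hScomp : IsCompact S :=
    (isCompact_closedBall _ _).inter_right
      (isClosed_le (continuous_infDist_pt A) continuous_const)
  have hSsub : S ⊆ {z | Metric.infDist z A < r} := fun w hw => lt_of_le_of_lt hw.2 hD2
  have hUC := hScomp.uniformContinuousOn_of_continuous (hcont.mono hSsub)
  obtain ⟨η, hη, hmod⟩ := (Metric.uniformContinuousOn_iff.mp hUC) ε₁ hε₁pos
  obtain ⟨n, hn⟩ : ∃ n : ℕ, L / η < n := exists_nat_gt _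
  have hnpos : 0 < (n:ℝ) := lt_of_le_of_lt (by positivity) hn
  set h := L / n with hhdef
  have hhpos : 0 < h := by positivity
  have hnh : (n:ℝ) * h = L := by
    rw [hhdef]; field_simp
  have hhη : h < η := by
    rw [hhdef, div_lt_iff₀ hnpos]
    calc L = (L / η) * η := by field_simp
      _ < n * η := by gcongr
      _ = η * n := by ring
  set X : ℕ → Euc d :=
    fun k => Nat.rec x₀ (fun _ w => w + (h / dist w (P w)) • (w - P w)) k with hXdef
  have hX0 : X 0 = x₀ := rfl
  have hXs : ∀ k, X (k + 1) = X k + (h / dist (X k) (P (X k))) • (X k - P (X k)) :=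
    fun k => rfl
  have F0 : ∀ k, dist (X (k + 1)) (X k) ≤ h := by
    intro k
    rw [hXs, dist_eq_norm, add_sub_cancel_left, norm_smul, Real.norm_eq_abs]
    rcases eq_or_lt_of_le (dist_nonneg : 0 ≤ dist (X k) (P (X k))) with h0 | h0
    · have hz : X k - P (X k) = 0 := sub_eq_zero.mpr (dist_eq_zero.mp h0.symm)
      rw [hz]
      simp [hhpos.le]
    · have hnorm : ‖X k - P (X k)‖ = dist (X k) (P (X k)) := (dist_eq_norm _ _).symm
      rw [hnorm, abs_of_pos (by positivity), div_mul_cancel₀ _ (ne_of_gt h0)]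
  have F1 : ∀ k : ℕ, dist (X k) x₀ ≤ k * h := by
    intro k
    induction k with
    | zero => simp [hX0]
    | succ k ih =>
      have := dist_triangle (X (k + 1)) (X k) x₀
      have h0 := F0 k
      push_cast
      push_cast at ih
      linarith
  have F2 : ∀ k : ℕ, Metric.infDist (X k) A ≤ δ₀ + k * h := by
    intro k
    have h1 : Metric.infDist (X k) A ≤ Metric.infDist x₀ A + dist (X k) x₀ :=
      Metric.infDist_le_infDist_add_dist
    have := F1 k
    rw [← hδ₀def] at h1
    linarith
  have hkh_le : ∀ k : ℕ, k ≤ n → (k:ℝ) * h ≤ L := by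
    intro k hk
    calc (k:ℝ) * h ≤ (n:ℝ) * h := by
          have : (k:ℝ) ≤ (n:ℝ) := by exact_mod_cast hk
          gcongr
      _ = L := hnh
  have hmemS : ∀ k : ℕ, k ≤ n → X k ∈ S := by
    intro k hk
    constructor
    · rw [Metric.mem_closedBall]
      calc dist (X k) x₀ ≤ k * h := F1 k
        _ ≤ L := hkh_le k hk
        _ ≤ D := by simp only [hLdef]; linarith [Metric.infDist_nonneg (x := x₀) (s := A)]
    · show Metric.infDist (X k) A ≤ D
      calc Metric.infDist (X k) A ≤ δ₀ + k * h := F2 k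
        _ ≤ δ₀ + L := by linarith [hkh_le k hk]
        _ = D := by simp only [hLdef]; ring
  have F3 : ∀ k : ℕ, k ≤ n →
      δ₀ + k * h - k * (h * ε₁ ^ 2 / δ₀ ^ 2) ≤ Metric.infDist (X k) A := by
    intro k
    induction k with
    | zero => intro _; simp [hX0]; exact le_of_eq hδ₀def
    | succ k ih =>
      intro hk1
      have hk : k ≤ n := Nat.le_of_succ_le hk1
      have ihk := ih hk
      have herr1 : h * ε₁ ^ 2 / δ₀ ^ 2 ≤ h := by
        have hsq2 : ε₁ ^ 2 ≤ δ₀ ^ 2 := pow_le_pow_left₀ hε₁pos.le hε₁δ 2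
        rw [div_le_iff₀ (by positivity)]
        nlinarith
      have hδlb : δ₀ ≤ Metric.infDist (X k) A := by
        have : (k:ℝ) * (h * ε₁ ^ 2 / δ₀ ^ 2) ≤ (k:ℝ) * h := by
          apply mul_le_mul_of_nonneg_left herr1 (Nat.cast_nonneg k)
        linarith
      have hzS : X k ∈ S := hmemS k hk
      have hz'S : X (k + 1) ∈ S := hmemS (k + 1) hk1
      have hdd : dist (X (k + 1)) (X k) < η := lt_of_le_of_lt (F0 k) hhη
      have hρ : dist (P (X (k + 1))) (P (X k)) < ε₁ := hmod _ hz'S _ hzS hdd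
      have hδnorm : ‖X k - P (X k)‖ = Metric.infDist (X k) A := by
        rw [← dist_eq_norm]; exact (hPd _).symm
      have hstep := step_alg (X k) (P (X k)) (P (X (k + 1))) (X (k + 1)) h δ₀ hhpos hx₀
        (by rw [hδnorm]; exact hδlb)
        (by
          rw [hδnorm, ← dist_eq_norm]
          exact Metric.infDist_le_dist_of_mem (hPmem _))
        (by rw [hXs k, dist_eq_norm])
      have hρ2 : ‖P (X (k + 1)) - P (X k)‖ ^ 2 ≤ ε₁ ^ 2 := by
        rw [← dist_eq_norm]
        exact pow_le_pow_left₀ dist_nonneg hρ.le 2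
      have hId : Metric.infDist (X (k + 1)) A = ‖X (k + 1) - P (X (k + 1))‖ := by
        rw [← dist_eq_norm]; exact hPd _
      have hfin : h * ‖P (X (k + 1)) - P (X k)‖ ^ 2 / δ₀ ^ 2 ≤ h * ε₁ ^ 2 / δ₀ ^ 2 := by
        gcongr
      rw [hId]
      rw [hδnorm] at hstep
      push_cast
      push_cast at ihk
      linarith
  refine ⟨X n, ?_, ?_⟩
  · rw [← dist_eq_norm]
    calc dist (X n) x₀ ≤ n * h := F1 n
      _ = L := hnh
      _ = D - δ₀ := by rw [hLdef]
  · have h3 := F3 n le_rfl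
    have : (n:ℝ) * (h * ε₁ ^ 2 / δ₀ ^ 2) = L * ε₁ ^ 2 / δ₀ ^ 2 := by
      rw [← hnh]; ring
    rw [this] at h3
    linarith

set_option maxHeartbeats 1000000 in
/-- Key proximal inequality (Federer 4.8(7)). -/
lemma key_prox (hA : IsClosed A) (P : Euc d → Euc d)
    (hPmem : ∀ z, P z ∈ A) (hPd : ∀ z, Metric.infDist z A = dist z (P z))
    {r : ℝ}
    (hcont : ContinuousOn P {z | Metric.infDist z A < r})
    (x₀ : Euc d) (hx₀ : 0 < Metric.infDist x₀ A)
    (R' : ℝ) (hR1 : Metric.infDist x₀ A ≤ R') (hR2 : R' < r)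
    {y : Euc d} (hy : y ∈ A) :
    ⟪x₀ - P x₀, y - P x₀⟫ ≤ Metric.infDist x₀ A * ‖y - P x₀‖ ^ 2 / (2 * R') := by
  set c := P x₀ with hcdef
  set δ₀ := Metric.infDist x₀ A with hδ₀def
  have hδnorm : ‖x₀ - c‖ = δ₀ := by rw [← dist_eq_norm]; exact (hPd x₀).symm
  have hδpos : 0 < ‖x₀ - c‖ := by rw [hδnorm]; exact hx₀
  have hR'pos : 0 < R' := lt_of_lt_of_le hx₀ hR1
  set K := ‖y - c‖ with hKdef
  have hK0 : 0 ≤ K := norm_nonneg _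
  refine le_of_forall_pos_le_add ?_
  intro ε hε
  set E := min (δ₀ / 2) (min (ε / (2 * (δ₀ + 1)))
    (δ₀ * ε ^ 2 / (8 * (δ₀ + 1) ^ 2 * (K + 1) ^ 2))) with hEdef
  have hEpos : 0 < E := lt_min (by positivity) (lt_min (by positivity) (by positivity))
  obtain ⟨w, hw1, hw2⟩ := reach_point hA P hPmem hPd hcont x₀ hx₀ R' hR1 hR2 E hEpos
  have h2 : R' - E ≤ ‖w - c‖ := by
    rw [← dist_eq_norm]
    exact le_trans (by linarith) (Metric.infDist_le_dist_of_mem (hPmem x₀))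
  have h3 : R' - E ≤ ‖w - y‖ := by
    rw [← dist_eq_norm]
    exact le_trans (by linarith) (Metric.infDist_le_dist_of_mem hy)
  have hE1 : E ≤ δ₀ / 2 := min_le_left _ _
  have hE2 : E ≤ ε / (2 * (δ₀ + 1)) := le_trans (min_le_right _ _) (min_le_left _ _)
  have hE3 : E ≤ δ₀ * ε ^ 2 / (8 * (δ₀ + 1) ^ 2 * (K + 1) ^ 2) :=
    le_trans (min_le_right _ _) (min_le_right _ _)
  have hEG := endgame c x₀ w y R' E hEpos.le (by rw [hδnorm]; exact hE1) hδpos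
    (by rw [hδnorm]; exact hR1) (by rw [hδnorm]; exact hw1) h2 h3
  rw [hδnorm] at hEG
  have hsqrt : Real.sqrt (2 * E / δ₀) ≤ ε / (2 * (δ₀ + 1) * (K + 1)) := by
    have hle : 2 * E / δ₀ ≤ (ε / (2 * (δ₀ + 1) * (K + 1))) ^ 2 := by
      rw [div_le_iff₀ hx₀, div_pow]
      have e1 : (2 * (δ₀ + 1) * (K + 1)) ^ 2 = 4 * (δ₀ + 1) ^ 2 * (K + 1) ^ 2 := by ring
      rw [e1]
      rw [div_mul_eq_mul_div, le_div_iff₀ (by positivity)]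
      have := mul_le_mul_of_nonneg_left hE3 (by positivity : (0:ℝ) ≤ 2 * (4 * (δ₀ + 1) ^ 2 * (K + 1) ^ 2))
      calc 2 * E * (4 * (δ₀ + 1) ^ 2 * (K + 1) ^ 2)
          ≤ 2 * (δ₀ * ε ^ 2 / (8 * (δ₀ + 1) ^ 2 * (K + 1) ^ 2)) * (4 * (δ₀ + 1) ^ 2 * (K + 1) ^ 2) := by
            nlinarith [hE3, sq_nonneg (δ₀ + 1), sq_nonneg (K + 1)]
        _ = ε ^ 2 * δ₀ := by field_simp; ring
    calc Real.sqrt (2 * E / δ₀) ≤ Real.sqrt ((ε / (2 * (δ₀ + 1) * (K + 1))) ^ 2) :=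
          Real.sqrt_le_sqrt hle
      _ = ε / (2 * (δ₀ + 1) * (K + 1)) := Real.sqrt_sq (by positivity)
  have t1 : δ₀ * E ≤ ε / 2 := by
    have := mul_le_mul_of_nonneg_left hE2 hx₀.le
    calc δ₀ * E ≤ δ₀ * (ε / (2 * (δ₀ + 1))) := this
      _ ≤ ε / 2 := by
        rw [show δ₀ * (ε / (2 * (δ₀ + 1))) = δ₀ * ε / (2 * (δ₀ + 1)) from by ring,
          div_le_div_iff₀ (by positivity) (by norm_num : (0:ℝ) < 2)]
        nlinarith
  have t2 : δ₀ * (K * Real.sqrt (2 * E / δ₀)) ≤ ε / 2 := by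
    have hs0 : 0 ≤ Real.sqrt (2 * E / δ₀) := Real.sqrt_nonneg _
    have := mul_le_mul_of_nonneg_left hsqrt (by positivity : (0:ℝ) ≤ δ₀ * K)
    calc δ₀ * (K * Real.sqrt (2 * E / δ₀)) = δ₀ * K * Real.sqrt (2 * E / δ₀) := by ring
      _ ≤ δ₀ * K * (ε / (2 * (δ₀ + 1) * (K + 1))) := this
      _ ≤ ε / 2 := by
        rw [show δ₀ * K * (ε / (2 * (δ₀ + 1) * (K + 1))) = δ₀ * K * ε / (2 * (δ₀ + 1) * (K + 1))
            from by ring,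
          div_le_div_iff₀ (by positivity) (by norm_num : (0:ℝ) < 2)]
        nlinarith [mul_nonneg hx₀.le hK0, hε.le]
  calc ⟪x₀ - c, y - c⟫ ≤ δ₀ * (K ^ 2 / (2 * R') + E + K * Real.sqrt (2 * E / δ₀)) := hEG
    _ = δ₀ * K ^ 2 / (2 * R') + (δ₀ * E + δ₀ * (K * Real.sqrt (2 * E / δ₀))) := by ring
    _ ≤ δ₀ * K ^ 2 / (2 * R') + ε := by linarith

set_option maxHeartbeats 2000000 in
/-- Forward direction. -/
lemma forward (hA : IsClosed A) (hne : A.Nonempty) {r : ℝ} (hr : 0 < r)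
    (H : ∀ x : Euc d, Metric.infDist x A < r → x ∈ unp A)
    {a b : Euc d} (ha : a ∈ A) (hb : b ∈ A) :
    Metric.infDist (b - a) (tanCone A a) ≤ ‖b - a‖ ^ 2 / (2 * r) := by
  have hex : ∀ z : Euc d, ∃ c, c ∈ A ∧ Metric.infDist z A = dist z c := by
    intro z
    obtain ⟨c, hc1, hc2⟩ := hA.exists_infDist_eq_dist hne z
    exact ⟨c, hc1, hc2⟩
  choose P hPmem hPd using hex
  have huniq : ∀ z, Metric.infDist z A < r →
      ∀ p ∈ A, dist z p = Metric.infDist z A → p = P z := by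
    intro z hz p hp hdp
    obtain ⟨q, hq, huq⟩ := H z hz
    have h1 : p = q := huq p ⟨hp, hdp⟩
    have h2 : P z = q := huq (P z) ⟨hPmem z, (hPd z).symm⟩
    rw [h1, h2]
  have hcont := proj_contOn hA P hPmem hPd huniq
  rcases eq_or_ne (b - a) 0 with hv0 | hv0
  · rw [hv0, Metric.infDist_zero_of_mem (zero_mem_tanCone A a)]
    positivity
  have hvpos : 0 < ‖b - a‖ := norm_pos_iff.mpr hv0
  have htpos : ∀ n : ℕ, (0:ℝ) < 1 / ((n:ℝ) + 2) := fun n => by positivity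
  have ht1 : ∀ n : ℕ, (1:ℝ) / ((n:ℝ) + 2) ≤ 1 := fun n => by
    rw [div_le_one (by positivity)]
    have : (0:ℝ) ≤ (n:ℝ) := n.cast_nonneg
    linarith
  set v := b - a with hvdef
  clear_value v
  set x : ℕ → Euc d := fun n => a + (1 / ((n:ℝ) + 2)) • v with hxdef
  clear_value x
  have hxa : ∀ n, dist (x n) a = (1 / ((n:ℝ) + 2)) * ‖v‖ := by
    intro n
    rw [dist_eq_norm]
    have e : x n - a = (1 / ((n:ℝ) + 2)) • v := by simp only [hxdef]; abel
    rw [e, norm_smul, Real.norm_eq_abs, abs_of_pos (htpos n)]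
  have hder : ∀ n, Metric.infDist (x n) A ≤ (1 / ((n:ℝ) + 2)) * ‖v‖ := by
    intro n
    rw [← hxa n]
    exact Metric.infDist_le_dist_of_mem ha
  set u : ℕ → Euc d := fun n => ((n:ℝ) + 2) • (P (x n) - a) with hudef
  clear_value u
  have hvu : ∀ n, ‖v - u n‖ = ((n:ℝ) + 2) * Metric.infDist (x n) A := by
    intro n
    have e : (1 / ((n:ℝ) + 2)) • (v - u n) = x n - P (x n) := by
      simp only [hudef, hxdef]
      rw [smul_sub, smul_smul,
        one_div_mul_cancel (by positivity : ((n:ℝ) + 2) ≠ 0), one_smul]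
      abel
    have e2 : ‖x n - P (x n)‖ = Metric.infDist (x n) A := by
      rw [← dist_eq_norm]; exact (hPd _).symm
    have e3 : (1 / ((n:ℝ) + 2)) * ‖v - u n‖ = Metric.infDist (x n) A := by
      rw [← e2, ← e, norm_smul, Real.norm_eq_abs, abs_of_pos (htpos n)]
    have e5 : ‖v - u n‖ = ((n:ℝ) + 2) * ((1 / ((n:ℝ) + 2)) * ‖v - u n‖) := by
      field_simp
    rw [e5, e3]
  have forR' : ∀ R', 0 < R' → R' < r →
      Metric.infDist v (tanCone A a) ≤ ‖v‖ ^ 2 / (2 * R') := by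
    intro R' hR'pos hR'r
    obtain ⟨N, hNgt⟩ : ∃ N : ℕ, ‖v‖ / R' < N := exists_nat_gt _
    have hNb : ∀ n, N ≤ n → (1 / ((n:ℝ) + 2)) * ‖v‖ ≤ R' := by
      intro n hn
      rw [div_mul_eq_mul_div, div_le_iff₀ (by positivity)]
      have h1 : ‖v‖ / R' < (n:ℝ) + 2 := by
        have : (N:ℝ) ≤ (n:ℝ) := by exact_mod_cast hn
        linarith
      rw [div_lt_iff₀ hR'pos] at h1
      nlinarith
    have hkey : ∀ n, N ≤ n →
        ‖v - u n‖ ≤ ‖v‖ ^ 2 * (1 + 4 * (1 / ((n:ℝ) + 2))) / (2 * R') := by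
      intro n hn
      set tn := (1 : ℝ) / ((n:ℝ) + 2) with htn
      set δn := Metric.infDist (x n) A with hδn
      have htnpos : 0 < tn := htpos n
      have htn1 : tn ≤ 1 := ht1 n
      have hδnle : δn ≤ tn * ‖v‖ := hder n
      rcases eq_or_lt_of_le (Metric.infDist_nonneg : (0:ℝ) ≤ δn) with h0 | h0
      · rw [hvu n, ← h0, mul_zero]
        positivity
      · have hδnR : δn ≤ R' := le_trans hδnle (hNb n hn)
        have hpa := key_prox hA P hPmem hPd hcont (x n) h0 R' hδnR hR'r ha
        have hpb := key_prox hA P hPmem hPd hcont (x n) h0 R' hδnR hR'r hb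
        set cn := P (x n) with hcn
        have hxc : ‖x n - cn‖ = δn := by rw [← dist_eq_norm]; exact (hPd _).symm
        have hid : δn ^ 2 = (1 - tn) * ⟪x n - cn, a - cn⟫ + tn * ⟪x n - cn, b - cn⟫ := by
          have e2 : (1 - tn) • (a - cn) + tn • (b - cn) = x n - cn := by
            simp only [hxdef, hvdef, htn]
            module
          calc δn ^ 2 = ⟪x n - cn, x n - cn⟫ := by
                rw [real_inner_self_eq_norm_sq, hxc]
            _ = ⟪x n - cn, (1 - tn) • (a - cn) + tn • (b - cn)⟫ := by rw [e2]
            _ = (1 - tn) * ⟪x n - cn, a - cn⟫ + tn * ⟪x n - cn, b - cn⟫ := by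
                rw [inner_add_right, real_inner_smul_right, real_inner_smul_right]
        have hna : ‖a - cn‖ ≤ 2 * tn * ‖v‖ := by
          have e : a - cn = (a - x n) + (x n - cn) := by abel
          have h1 : ‖a - x n‖ = tn * ‖v‖ := by
            rw [norm_sub_rev, ← dist_eq_norm, hxa n]
          calc ‖a - cn‖ ≤ ‖a - x n‖ + ‖x n - cn‖ := by rw [e]; exact norm_add_le _ _
            _ ≤ tn * ‖v‖ + tn * ‖v‖ := by rw [h1, hxc]; linarith
            _ = 2 * tn * ‖v‖ := by ring
        have hnb2 : ‖b - cn‖ ≤ ‖v‖ := by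
          have e : b - cn = (b - x n) + (x n - cn) := by abel
          have h1 : ‖b - x n‖ = (1 - tn) * ‖v‖ := by
            have e2 : b - x n = (1 - tn) • v := by
              simp only [hxdef, hvdef, htn]
              module
            rw [e2, norm_smul, Real.norm_eq_abs,
              abs_of_nonneg (by linarith : (0:ℝ) ≤ 1 - tn)]
          calc ‖b - cn‖ ≤ ‖b - x n‖ + ‖x n - cn‖ := by rw [e]; exact norm_add_le _ _
            _ ≤ (1 - tn) * ‖v‖ + tn * ‖v‖ := by rw [h1, hxc]; linarith
            _ = ‖v‖ := by ring
        have hsqa : ‖a - cn‖ ^ 2 ≤ (2 * tn * ‖v‖) ^ 2 :=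
          pow_le_pow_left₀ (norm_nonneg _) hna 2
        have hsqb : ‖b - cn‖ ^ 2 ≤ ‖v‖ ^ 2 :=
          pow_le_pow_left₀ (norm_nonneg _) hnb2 2
        have hb1 : ⟪x n - cn, a - cn⟫ ≤ δn * (2 * tn * ‖v‖) ^ 2 / (2 * R') :=
          le_trans hpa ((div_le_div_iff_of_pos_right (by positivity)).mpr
            (mul_le_mul_of_nonneg_left hsqa h0.le))
        have hb2 : ⟪x n - cn, b - cn⟫ ≤ δn * ‖v‖ ^ 2 / (2 * R') :=
          le_trans hpb ((div_le_div_iff_of_pos_right (by positivity)).mpr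
            (mul_le_mul_of_nonneg_left hsqb h0.le))
        set Q := (1 - tn) * (2 * tn * ‖v‖) ^ 2 + tn * ‖v‖ ^ 2 with hQ
        have hcomb : δn * δn ≤ δn * (Q / (2 * R')) := by
          have c1 : (1 - tn) * ⟪x n - cn, a - cn⟫
              ≤ (1 - tn) * (δn * (2 * tn * ‖v‖) ^ 2 / (2 * R')) :=
            mul_le_mul_of_nonneg_left hb1 (by linarith)
          have c2 : tn * ⟪x n - cn, b - cn⟫ ≤ tn * (δn * ‖v‖ ^ 2 / (2 * R')) :=
            mul_le_mul_of_nonneg_left hb2 htnpos.le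
          have e6 : (1 - tn) * (δn * (2 * tn * ‖v‖) ^ 2 / (2 * R'))
              + tn * (δn * ‖v‖ ^ 2 / (2 * R')) = δn * (Q / (2 * R')) := by
            rw [hQ]; ring
          have e7 : δn * δn = δn ^ 2 := by ring
          rw [e7, hid]
          linarith
        have hδfinal : δn ≤ Q / (2 * R') := le_of_mul_le_mul_left hcomb h0
        have hQle : ((n:ℝ) + 2) * Q ≤ ‖v‖ ^ 2 * (1 + 4 * tn) := by
          have htn_inv : tn * ((n:ℝ) + 2) = 1 := by
            rw [htn]; field_simp
          have h8 : ((n:ℝ) + 2) * tn ^ 2 = tn := by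
            calc ((n:ℝ) + 2) * tn ^ 2 = (tn * ((n:ℝ) + 2)) * tn := by ring
              _ = tn := by rw [htn_inv]; ring
          have h9 : ((n:ℝ) + 2) * tn = 1 := by rw [mul_comm]; exact htn_inv
          have e10 : ((n:ℝ) + 2) * Q
              = 4 * (((n:ℝ) + 2) * tn ^ 2) * ‖v‖ ^ 2
                - 4 * (((n:ℝ) + 2) * tn ^ 2) * tn * ‖v‖ ^ 2
                + (((n:ℝ) + 2) * tn) * ‖v‖ ^ 2 := by
            rw [hQ]; ring
          rw [e10, h8, h9]
          nlinarith [sq_nonneg ‖v‖, sq_nonneg tn, htnpos.le, mul_nonneg (mul_nonneg (sq_nonneg tn) htnpos.le) (sq_nonneg ‖v‖)]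
        rw [hvu n, ← hδn]
        calc ((n:ℝ) + 2) * δn ≤ ((n:ℝ) + 2) * (Q / (2 * R')) :=
              mul_le_mul_of_nonneg_left hδfinal (by positivity)
          _ = (((n:ℝ) + 2) * Q) / (2 * R') := by ring
          _ ≤ ‖v‖ ^ 2 * (1 + 4 * tn) / (2 * R') :=
              (div_le_div_iff_of_pos_right (by positivity)).mpr hQle
    -- boundedness of the sequence u (m + N)
    set B := ‖v‖ + ‖v‖ ^ 2 * 5 / (2 * R') with hB
    have hubd : ∀ m : ℕ, u (m + N) ∈ Metric.closedBall (0 : Euc d) B := by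
      intro m
      rw [Metric.mem_closedBall, dist_zero_right]
      have h1 := hkey (m + N) (Nat.le_add_left N m)
      have h2 : ‖u (m + N)‖ ≤ ‖v‖ + ‖v - u (m + N)‖ := by
        have e : u (m + N) = v - (v - u (m + N)) := by abel
        calc ‖u (m + N)‖ = ‖v - (v - u (m + N))‖ := by rw [← e]
          _ ≤ ‖v‖ + ‖v - u (m + N)‖ := norm_sub_le _ _
      have h3 : ‖v‖ ^ 2 * (1 + 4 * (1 / (((m + N : ℕ):ℝ) + 2))) / (2 * R')
          ≤ ‖v‖ ^ 2 * 5 / (2 * R') := by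
        apply (div_le_div_iff_of_pos_right (by positivity)).mpr
        have := ht1 (m + N)
        nlinarith [sq_nonneg ‖v‖, htpos (m + N)]
      rw [hB]
      linarith
    obtain ⟨ulim, _, φ, hφ, hUconv⟩ :=
      tendsto_subseq_of_bounded Metric.isBounded_closedBall hubd
    have hφm : ∀ m : ℕ, (1 : ℝ) / (((φ m + N : ℕ):ℝ) + 2) ≤ 1 / ((m:ℝ) + 2) := by
      intro m
      apply one_div_le_one_div_of_le (by positivity)
      have h1 : m ≤ φ m + N := le_trans hφ.le_apply (Nat.le_add_right _ _)
      have h2 : (m:ℝ) ≤ ((φ m + N : ℕ):ℝ) := by exact_mod_cast h1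
      linarith
    have hT : Filter.Tendsto (fun m : ℕ => (1:ℝ) / ((m:ℝ) + 2)) Filter.atTop (nhds 0) := by
      apply squeeze_zero (fun m => by positivity) (fun m => ?_)
        tendsto_one_div_add_atTop_nhds_zero_nat
      apply one_div_le_one_div_of_le (by positivity)
      have : (0:ℝ) ≤ (m:ℝ) := m.cast_nonneg
      linarith
    have hvul : ‖v - ulim‖ ≤ ‖v‖ ^ 2 / (2 * R') := by
      have l1 : Filter.Tendsto (fun m => ‖v - u (φ m + N)‖) Filter.atTop
          (nhds ‖v - ulim‖) := (Filter.Tendsto.sub tendsto_const_nhds hUconv).norm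
      have l2 : Filter.Tendsto (fun m : ℕ => ‖v‖ ^ 2 * (1 + 4 * (1 / ((m:ℝ) + 2))) / (2 * R'))
          Filter.atTop (nhds (‖v‖ ^ 2 / (2 * R'))) := by
        have hc : Continuous (fun s : ℝ => ‖v‖ ^ 2 * (1 + 4 * s) / (2 * R')) := by
          apply Continuous.div_const
          exact continuous_const.mul (continuous_const.add (continuous_const.mul continuous_id))
        have := (hc.tendsto 0).comp hT
        simp only [Function.comp_def] at this
        simpa using this
      refine le_of_tendsto_of_tendsto' l1 l2 ?_
      intro m
      calc ‖v - u (φ m + N)‖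
          ≤ ‖v‖ ^ 2 * (1 + 4 * (1 / (((φ m + N : ℕ):ℝ) + 2))) / (2 * R') :=
            hkey _ (Nat.le_add_left N _)
        _ ≤ ‖v‖ ^ 2 * (1 + 4 * (1 / ((m:ℝ) + 2))) / (2 * R') := by
            apply (div_le_div_iff_of_pos_right (by positivity)).mpr
            have := hφm m
            nlinarith [sq_nonneg ‖v‖]
    have htan : ulim ∈ tanCone A a := by
      rcases eq_or_ne ulim 0 with h0 | h0
      · rw [h0]; exact zero_mem_tanCone A a
      · have hpos : 0 < ‖ulim‖ := norm_pos_iff.mpr h0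
        have hev : ∀ᶠ m in Filter.atTop, ‖ulim‖ / 2 < ‖u (φ m + N)‖ :=
          hUconv.norm.eventually (eventually_gt_nhds (by linarith))
        obtain ⟨M, hM⟩ := Filter.eventually_atTop.mp hev
        have hBpos : 0 ≤ B := by
          rw [hB]; positivity
        have hnorm_u : ∀ m : ℕ, ‖u (m + N)‖ ≤ B := by
          intro m
          have := hubd m
          rwa [Metric.mem_closedBall, dist_zero_right] at this
        have hPxa : ∀ m : ℕ, P (x (φ (m + M) + N)) - a
            = (1 / (((φ (m + M) + N : ℕ):ℝ) + 2)) • u (φ (m + M) + N) := by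
          intro m
          simp only [hudef]
          rw [smul_smul,
            one_div_mul_cancel (by positivity : (((φ (m + M) + N : ℕ):ℝ) + 2) ≠ 0), one_smul]
        refine Or.inr ⟨fun m => P (x (φ (m + M) + N)),
          fun m => ((φ (m + M) + N : ℕ):ℝ) + 2, ?_, ?_, ?_, ?_⟩
        · intro m
          refine ⟨hPmem _, ?_⟩
          intro hePa
          have hePa2 : P (x (φ (m + M) + N)) = a := hePa
          have h1 := hM (m + M) (Nat.le_add_left M m)
          have h2 : u (φ (m + M) + N) = 0 := by
            simp only [hudef]
            have : P (x (φ (m + M) + N)) - a = 0 := by rw [hePa2]; simp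
            rw [this, smul_zero]
          rw [h2, norm_zero] at h1
          linarith
        · rw [tendsto_iff_dist_tendsto_zero]
          have hbound : ∀ m : ℕ, dist (P (x (φ (m + M) + N))) a ≤ (1 / ((m:ℝ) + 2)) * B := by
            intro m
            rw [dist_eq_norm, hPxa m, norm_smul, Real.norm_eq_abs,
              abs_of_pos (by positivity : (0:ℝ) < 1 / (((φ (m + M) + N : ℕ):ℝ) + 2))]
            have h1 : ‖u (φ (m + M) + N)‖ ≤ B := hnorm_u (φ (m + M))
            have h2 : (1 : ℝ) / (((φ (m + M) + N : ℕ):ℝ) + 2) ≤ 1 / ((m:ℝ) + 2) := by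
              apply one_div_le_one_div_of_le (by positivity)
              have h3 : m ≤ φ (m + M) + N :=
                le_trans (le_trans (Nat.le_add_right m M) hφ.le_apply) (Nat.le_add_right _ _)
              have h4 : (m:ℝ) ≤ ((φ (m + M) + N : ℕ):ℝ) := by exact_mod_cast h3
              linarith
            calc (1 / (((φ (m + M) + N : ℕ):ℝ) + 2)) * ‖u (φ (m + M) + N)‖
                ≤ (1 / (((φ (m + M) + N : ℕ):ℝ) + 2)) * B := by
                  apply mul_le_mul_of_nonneg_left h1 (by positivity)
              _ ≤ (1 / ((m:ℝ) + 2)) * B := mul_le_mul_of_nonneg_right h2 hBpos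
          apply squeeze_zero (fun m => dist_nonneg) hbound
          have := hT.mul_const B
          simpa using this
        · intro m; positivity
        · have e : (fun m : ℕ => ((((φ (m + M) + N : ℕ):ℝ)) + 2) • (P (x (φ (m + M) + N)) - a))
              = fun m => u (φ (m + M) + N) := by
            funext m
            rw [hPxa m, smul_smul,
              mul_one_div_cancel (by positivity : (((φ (m + M) + N : ℕ):ℝ) + 2) ≠ 0), one_smul]
          rw [e]
          exact hUconv.comp (Filter.tendsto_add_atTop_nat M)
    calc Metric.infDist v (tanCone A a) ≤ dist v ulim :=
          Metric.infDist_le_dist_of_mem htan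
      _ = ‖v - ulim‖ := dist_eq_norm _ _
      _ ≤ ‖v‖ ^ 2 / (2 * R') := hvul
  refine le_of_forall_pos_le_add ?_
  intro ε hε
  set R' := r * ‖v‖ ^ 2 / (‖v‖ ^ 2 + 2 * r * ε) with hR'
  have hR'pos : 0 < R' := by rw [hR']; positivity
  have hR'lt : R' < r := by
    rw [hR', div_lt_iff₀ (by positivity)]
    nlinarith [mul_pos (mul_pos hr hr) hε]
  have hmain := forR' R' hR'pos hR'lt
  have heq : ‖v‖ ^ 2 / (2 * R') = ‖v‖ ^ 2 / (2 * r) + ε := by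
    rw [hR']
    field_simp
  rw [heq] at hmain
  exact hmain

/-- First-order optimality: tangent vectors at a nearest point make a nonpositive
inner product with the direction towards the base point. -/
lemma tangent_halfspace {p x : Euc d} (hp : p ∈ A)
    (hmin : ∀ q ∈ A, dist x p ≤ dist x q) :
    ∀ u ∈ tanCone A p, ⟪x - p, u⟫ ≤ 0 := by
  intro u hu
  rcases hu with rfl | ⟨x', rr, hmem, hx', hrpos, hlim⟩
  · simp
  · have key : ∀ n, ⟪x - p, rr n • (x' n - p)⟫ ≤ ‖rr n • (x' n - p)‖ * (‖x' n - p‖ / 2) := by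
      intro n
      have h1 : dist x p ≤ dist x (x' n) := hmin _ (hmem n).1
      have h2 : ⟪x - p, x' n - p⟫ ≤ ‖x' n - p‖ ^ 2 / 2 := by
        have e1 : dist x (x' n) = ‖(x - p) - (x' n - p)‖ := by
          rw [dist_eq_norm]; congr 1; abel
        have h3 : ‖x - p‖ ^ 2 ≤ ‖(x - p) - (x' n - p)‖ ^ 2 := by
          rw [← e1, ← dist_eq_norm]
          exact pow_le_pow_left₀ dist_nonneg h1 2
        have h4 := norm_sub_sq_real (x - p) (x' n - p)
        linarith
      rw [real_inner_smul_right]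
      have e2 : ‖rr n • (x' n - p)‖ = rr n * ‖x' n - p‖ := by
        rw [norm_smul, Real.norm_eq_abs, abs_of_pos (hrpos n)]
      rw [e2]
      calc rr n * ⟪x - p, x' n - p⟫ ≤ rr n * (‖x' n - p‖ ^ 2 / 2) :=
            mul_le_mul_of_nonneg_left h2 (hrpos n).le
        _ = rr n * ‖x' n - p‖ * (‖x' n - p‖ / 2) := by ring
    have l1 : Filter.Tendsto (fun n => ⟪x - p, rr n • (x' n - p)⟫)
        Filter.atTop (nhds ⟪x - p, u⟫) := Filter.Tendsto.inner tendsto_const_nhds hlim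
    have lsub : Filter.Tendsto (fun n => x' n - p) Filter.atTop (nhds 0) := by
      have := hx'.sub (tendsto_const_nhds (x := p))
      simpa using this
    have l2 : Filter.Tendsto (fun n => ‖rr n • (x' n - p)‖ * (‖x' n - p‖ / 2))
        Filter.atTop (nhds (‖u‖ * (‖(0 : Euc d)‖ / 2))) :=
      Filter.Tendsto.mul hlim.norm (lsub.norm.div_const 2)
    have l2' : Filter.Tendsto (fun n => ‖rr n • (x' n - p)‖ * (‖x' n - p‖ / 2))
        Filter.atTop (nhds 0) := by simpa using l2
    exact le_of_tendsto_of_tendsto' l1 l2' key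

/-- Converse direction. -/
lemma converse (hA : IsClosed A) (hne : A.Nonempty) {r : ℝ} (hr : 0 < r)
    (H : ∀ a ∈ A, ∀ b ∈ A,
      Metric.infDist (b - a) (tanCone A a) ≤ ‖b - a‖ ^ 2 / (2 * r))
    (x : Euc d) (hx : Metric.infDist x A < r) : x ∈ unp A := by
  obtain ⟨p, hp, hdp⟩ := hA.exists_infDist_eq_dist hne x
  refine ⟨p, ⟨hp, hdp.symm⟩, ?_⟩
  rintro q ⟨hq, hdq⟩
  rcases eq_or_lt_of_le (Metric.infDist_nonneg : (0:ℝ) ≤ Metric.infDist x A) with h0 | h0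
  · have hq0 : x = q := by rw [← dist_eq_zero, hdq, ← h0]
    have hp0 : x = p := by rw [← dist_eq_zero, ← hdp, ← h0]
    rw [← hq0, ← hp0]
  · set dd := Metric.infDist x A with hdd
    have hminq : ∀ y ∈ A, dist x q ≤ dist x y := by
      intro y hy; rw [hdq]; exact Metric.infDist_le_dist_of_mem hy
    have hhs := tangent_halfspace hq hminq
    have hipq : ⟪x - q, p - q⟫ = ‖p - q‖ ^ 2 / 2 := by
      have e1 : ‖(x - q) - (p - q)‖ = ‖x - q‖ := by
        have : (x - q) - (p - q) = x - p := by abel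
        rw [this, ← dist_eq_norm, ← dist_eq_norm, ← hdp, hdq]
      have := norm_sub_sq_real (x - q) (p - q)
      rw [e1] at this
      linarith
    have hlow : ‖p - q‖ ^ 2 / (2 * dd) ≤ Metric.infDist (p - q) (tanCone A q) := by
      refine my_le_infDist ⟨0, zero_mem_tanCone A q⟩ ?_
      intro u hu
      have h1 : ⟪x - q, (p - q) - u⟫ ≤ ‖x - q‖ * ‖(p - q) - u‖ := real_inner_le_norm _ _
      have h2 : ⟪x - q, (p - q) - u⟫ = ⟪x - q, p - q⟫ - ⟪x - q, u⟫ := inner_sub_right _ _ _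
      have h3 : ⟪x - q, u⟫ ≤ 0 := hhs u hu
      have h4 : ‖x - q‖ = dd := by rw [← dist_eq_norm, hdq]
      have h5 : ‖p - q‖ ^ 2 / 2 ≤ dd * ‖(p - q) - u‖ := by
        rw [h4] at h1; rw [hipq] at h2; linarith
      rw [dist_eq_norm]
      rw [div_le_iff₀ (by positivity : (0:ℝ) < 2 * dd)]
      calc ‖p - q‖ ^ 2 = 2 * (‖p - q‖ ^ 2 / 2) := by ring
        _ ≤ 2 * (dd * ‖(p - q) - u‖) := by linarith
        _ = ‖p - q - u‖ * (2 * dd) := by ring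
    have hup : Metric.infDist (p - q) (tanCone A q) ≤ ‖p - q‖ ^ 2 / (2 * r) := H q hq p hp
    have hfin : ‖p - q‖ ^ 2 ≤ 0 := by
      have hcmp : ‖p - q‖ ^ 2 / (2 * dd) ≤ ‖p - q‖ ^ 2 / (2 * r) := le_trans hlow hup
      rw [div_le_div_iff₀ (by positivity) (by positivity)] at hcmp
      nlinarith [sq_nonneg ‖p - q‖]
    have : p - q = 0 := by
      have := norm_eq_zero.mp (le_antisymm (by nlinarith [norm_nonneg (p - q)]) (norm_nonneg _))
      exact this
    have : p = q := by
      have h := sub_eq_zero.mp this; exact h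
    rw [this]

end Main

theorem stmt3 {d : ℕ} (A : Set (Euc d)) (hA : IsClosed A) (r : ℝ) (hr : 0 < r) :
    ENNReal.ofReal r ≤ reach A ↔
      ∀ a ∈ A, ∀ b ∈ A, Metric.infDist (b - a) (tanCone A a) ≤ ‖b - a‖ ^ 2 / (2 * r) := by
  rcases A.eq_empty_or_nonempty with rfl | hne
  · constructor
    · intro _ a ha; exact absurd ha (by simp)
    · intro _
      rw [reach_ge_iff]
      intro a ha; exact absurd ha (by simp)
  · rw [reach_ge_iff]
    constructor
    · intro H a ha b hb
      have H' : ∀ x : Euc d, Metric.infDist x A < r → x ∈ unp A := by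
        intro x hx
        obtain ⟨y, hy, hlt⟩ := (Metric.infDist_lt_iff hne).mp hx
        exact H y hy x hlt
      exact forward hA hne hr H' ha hb
    · intro H a ha x hx
      refine converse hA hne hr H x ?_
      exact lt_of_le_of_lt (Metric.infDist_le_dist_of_mem ha) hx
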